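/- arXiv:2001.01814 — 3 statements merged into one kernel-verified Lean document; each statement's English description precedes it below -/
import Mathlib

section
/- Let k be a finite field of characteristic 2 and let G be a subgroup of GL₂(k) whose natural action on k² is irreducible (there is no nonzero proper G-stable k-subspace) but not absolutely irreducible (after extending scalars to an algebraic closure k̄, the action of G on k̄² has a nonzero proper G-stable subspace). Then G is cyclic of odd order. -/
open Matrix

/-- If a subgroup `G ≤ GL₂(k)`, `k` a finite field of characteristic 2, acts irreducibly but
not absolutely irreducibly on `k²`, then `G` is cyclic of odd order. -/
theorem irreducible_not_absolutely_irreducible_cyclic_odd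
    (k : Type) [Field k] [Fintype k] [CharP k 2]
    (G : Subgroup (GL (Fin 2) k))
    (hirr : ∀ W : Submodule k (Fin 2 → k),
      (∀ g ∈ G, ∀ w ∈ W, Matrix.mulVec (g : Matrix (Fin 2) (Fin 2) k) w ∈ W) →
        W = ⊥ ∨ W = ⊤)
    (habs : ∃ W : Submodule (AlgebraicClosure k) (Fin 2 → AlgebraicClosure k),
      W ≠ ⊥ ∧ W ≠ ⊤ ∧
      ∀ g ∈ G, ∀ w ∈ W,
        Matrix.mulVec
          ((g : Matrix (Fin 2) (Fin 2) k).map (algebraMap k (AlgebraicClosure k))) w ∈ W) :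
    IsCyclic G ∧ Odd (Nat.card G) := by
  classical
  set K := AlgebraicClosure k with hK
  set φ := algebraMap k K with hφ
  have hφinj : Function.Injective φ := RingHom.injective φ
  have hK2 : (2 : K) = 0 := by
    have := CharP.cast_eq_zero K 2
    exact_mod_cast this
  obtain ⟨W, hW0, hWtop, hstab⟩ := habs
  obtain ⟨v, hvW, hv0⟩ := Submodule.exists_mem_ne_zero_of_ne_bot hW0
  -- W is spanned by v
  have hWspan : W = Submodule.span K {v} := by
    have h1 : Submodule.span K {v} ≤ W :=
      Submodule.span_le.2 (Set.singleton_subset_iff.2 hvW)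
    have hr1 : Module.finrank K (Submodule.span K ({v} : Set (Fin 2 → K))) = 1 :=
      finrank_span_singleton hv0
    have hr2 : Module.finrank K W < 2 := by
      have h := Submodule.finrank_lt (K := K) (V := Fin 2 → K) hWtop
      simpa using h
    have hr3 : 1 ≤ Module.finrank K W := hr1 ▸ Submodule.finrank_mono h1
    have hr4 : Module.finrank K W = 1 := le_antisymm (by omega) hr3
    exact (Submodule.eq_of_le_of_finrank_eq h1 (hr1.trans hr4.symm)).symm
  have key : ∀ g : GL (Fin 2) k, g ∈ G →
      ∃ c : K, (g : Matrix (Fin 2) (Fin 2) k).map φ *ᵥ v = c • v := by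
    intro g hg
    have h := hstab g hg v hvW
    rw [hWspan, Submodule.mem_span_singleton] at h
    obtain ⟨c, hc⟩ := h
    exact ⟨c, hc.symm⟩
  have huniq : ∀ c d : K, c • v = d • v → c = d := by
    intro c d h
    have h2 : (c - d) • v = 0 := by rw [sub_smul, h, sub_self]
    rcases smul_eq_zero.1 h2 with h3 | h3
    · exact sub_eq_zero.1 h3
    · exact absurd h3 hv0
  have hcancel : ∀ (g : GL (Fin 2) k) (u : Fin 2 → K),
      (g : Matrix (Fin 2) (Fin 2) k).map φ *ᵥ u = 0 → u = 0 := by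
    intro g u hu
    have h : ((g⁻¹ : GL (Fin 2) k) : Matrix (Fin 2) (Fin 2) k).map φ *ᵥ
        ((g : Matrix (Fin 2) (Fin 2) k).map φ *ᵥ u) = 0 := by
      rw [hu, Matrix.mulVec_zero]
    rwa [Matrix.mulVec_mulVec, ← Matrix.map_mul, ← Units.val_mul, inv_mul_cancel,
      Units.val_one, Matrix.map_one φ (map_zero φ) (map_one φ), Matrix.one_mulVec] at h
  -- Core: elements of G fixing v are trivial
  have hS : ∀ e : GL (Fin 2) k, e ∈ G →
      (e : Matrix (Fin 2) (Fin 2) k).map φ *ᵥ v = v → e = 1 := by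
    intro e heG hev
    by_contra hne1
    set M : Matrix (Fin 2) (Fin 2) k := (e : Matrix (Fin 2) (Fin 2) k) - 1 with hM
    have hM0 : M ≠ 0 := by
      intro h
      apply hne1
      apply Units.ext
      have : (e : Matrix (Fin 2) (Fin 2) k) = 1 := by
        have := sub_eq_zero.1 h
        exact this
      simpa using this
    have hMv : M.map φ *ᵥ v = 0 := by
      rw [hM, Matrix.map_sub φ (map_sub φ), Matrix.sub_mulVec, hev,
        Matrix.map_one φ (map_zero φ) (map_one φ), Matrix.one_mulVec, sub_self]
    obtain ⟨i, j, hij⟩ : ∃ i j, M i j ≠ 0 := by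
      by_contra h
      push_neg at h
      exact hM0 (by ext i j; simpa using h i j)
    have hwrow : M i 0 ≠ 0 ∨ M i 1 ≠ 0 := by
      fin_cases j
      · exact Or.inl hij
      · exact Or.inr hij
    set w : Fin 2 → k := ![M i 1, M i 0] with hw
    have hw0 : w ≠ 0 := by
      intro h
      rcases hwrow with h0 | h1
      · exact h0 (by simpa [hw] using congrFun h 1)
      · exact h1 (by simpa [hw] using congrFun h 0)
    have hrow : φ (M i 0) * v 0 + φ (M i 1) * v 1 = 0 := by
      have h := congrFun hMv i
      simpa [Matrix.mulVec, dotProduct, Fin.sum_univ_two, Matrix.map_apply] using h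
    obtain ⟨c, hc⟩ : ∃ c : K, v = c • (φ ∘ w) := by
      rcases hwrow with h0 | h1
      · refine ⟨v 1 / φ (M i 0), ?_⟩
        have hφ0 : φ (M i 0) ≠ 0 := fun h => h0 (hφinj (by simpa using h))
        funext l
        fin_cases l
        · show v 0 = v 1 / φ (M i 0) * φ (w 0)
          have hw0' : w 0 = M i 1 := rfl
          rw [hw0']
          field_simp
          linear_combination hrow - φ (M i 1) * v 1 * hK2
        · show v 1 = v 1 / φ (M i 0) * φ (w 1)
          have hw1' : w 1 = M i 0 := rfl
          rw [hw1']
          field_simp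
      · refine ⟨v 0 / φ (M i 1), ?_⟩
        have hφ1 : φ (M i 1) ≠ 0 := fun h => h1 (hφinj (by simpa using h))
        funext l
        fin_cases l
        · show v 0 = v 0 / φ (M i 1) * φ (w 0)
          have hw0' : w 0 = M i 1 := rfl
          rw [hw0']
          field_simp
        · show v 1 = v 0 / φ (M i 1) * φ (w 1)
          have hw1' : w 1 = M i 0 := rfl
          rw [hw1']
          field_simp
          linear_combination hrow - φ (M i 0) * v 0 * hK2
    have hc0 : c ≠ 0 := fun h => hv0 (by rw [hc, h, zero_smul])
    -- every element of G fixing v fixes w over k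
    have hfix : ∀ h' : GL (Fin 2) k, h' ∈ G →
        (h' : Matrix (Fin 2) (Fin 2) k).map φ *ᵥ v = v →
        (h' : Matrix (Fin 2) (Fin 2) k) *ᵥ w = w := by
      intro h' hG hfv
      have h1 : (h' : Matrix (Fin 2) (Fin 2) k).map φ *ᵥ (φ ∘ w) = φ ∘ w := by
        have h2 := hfv
        rw [hc, Matrix.mulVec_smul] at h2
        exact smul_right_injective _ hc0 h2
      funext l
      apply hφinj
      rw [RingHom.map_mulVec φ, h1]
      rfl
    -- the fixed space over k
    let W₀ : Submodule k (Fin 2 → k) :=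
      { carrier := {x | ∀ h' : GL (Fin 2) k, h' ∈ G →
          (h' : Matrix (Fin 2) (Fin 2) k).map φ *ᵥ v = v →
          (h' : Matrix (Fin 2) (Fin 2) k) *ᵥ x = x}
        add_mem' := fun ha hb h' h1 h2 => by
          rw [Matrix.mulVec_add, ha h' h1 h2, hb h' h1 h2]
        zero_mem' := fun h' h1 h2 => by rw [Matrix.mulVec_zero]
        smul_mem' := fun c' x hx h' h1 h2 => by
          rw [Matrix.mulVec_smul, hx h' h1 h2] }
    have hW₀stab : ∀ γ ∈ G, ∀ x ∈ W₀, (γ : Matrix (Fin 2) (Fin 2) k) *ᵥ x ∈ W₀ := by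
      intro γ hγ x hx h' hh' hfv
      obtain ⟨cγ, hcγ⟩ := key γ hγ
      have hvinv : v = cγ • ((γ⁻¹ : GL (Fin 2) k) : Matrix (Fin 2) (Fin 2) k).map φ *ᵥ v := by
        have h1 := congrArg
          (fun u => ((γ⁻¹ : GL (Fin 2) k) : Matrix (Fin 2) (Fin 2) k).map φ *ᵥ u) hcγ
        rwa [Matrix.mulVec_mulVec, ← Matrix.map_mul, ← Units.val_mul, inv_mul_cancel,
          Units.val_one, Matrix.map_one φ (map_zero φ) (map_one φ), Matrix.one_mulVec,
          Matrix.mulVec_smul] at h1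
      have hconj1 : ((γ⁻¹ * h' * γ : GL (Fin 2) k) : Matrix (Fin 2) (Fin 2) k).map φ *ᵥ v
          = v := by
        have e1 : ((γ⁻¹ * h' * γ : GL (Fin 2) k) : Matrix (Fin 2) (Fin 2) k)
            = ((γ⁻¹ : GL (Fin 2) k) : Matrix (Fin 2) (Fin 2) k) *
              ((h' : Matrix (Fin 2) (Fin 2) k) * (γ : Matrix (Fin 2) (Fin 2) k)) := by
          rw [Units.val_mul, Units.val_mul, mul_assoc]
        rw [e1, Matrix.map_mul, Matrix.map_mul, ← Matrix.mulVec_mulVec,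
          ← Matrix.mulVec_mulVec, hcγ, Matrix.mulVec_smul, hfv, Matrix.mulVec_smul]
        exact hvinv.symm
      have hmem : γ⁻¹ * h' * γ ∈ G := mul_mem (mul_mem (inv_mem hγ) hh') hγ
      have h2 := hx (γ⁻¹ * h' * γ) hmem hconj1
      have e2 : ((γ⁻¹ * h' * γ : GL (Fin 2) k) : Matrix (Fin 2) (Fin 2) k)
          = ((γ⁻¹ : GL (Fin 2) k) : Matrix (Fin 2) (Fin 2) k) *
            ((h' : Matrix (Fin 2) (Fin 2) k) * (γ : Matrix (Fin 2) (Fin 2) k)) := by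
        rw [Units.val_mul, Units.val_mul, mul_assoc]
      rw [e2] at h2
      have e3 : (γ : Matrix (Fin 2) (Fin 2) k) *
          (((γ⁻¹ : GL (Fin 2) k) : Matrix (Fin 2) (Fin 2) k) *
            ((h' : Matrix (Fin 2) (Fin 2) k) * (γ : Matrix (Fin 2) (Fin 2) k)))
          = (h' : Matrix (Fin 2) (Fin 2) k) * (γ : Matrix (Fin 2) (Fin 2) k) := by
        rw [← mul_assoc, ← Units.val_mul, mul_inv_cancel, Units.val_one, one_mul]
      rw [Matrix.mulVec_mulVec, ← e3, ← Matrix.mulVec_mulVec, h2]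
    have hwW₀ : w ∈ W₀ := fun h' h1 h2 => hfix h' h1 h2
    rcases hirr W₀ hW₀stab with hbot | htop
    · exact hw0 ((Submodule.mem_bot k).1 (hbot ▸ hwW₀))
    · apply hne1
      apply Units.ext
      have hx : ∀ x : Fin 2 → k, (e : Matrix (Fin 2) (Fin 2) k) *ᵥ x = x := by
        intro x
        have hxW : x ∈ W₀ := htop ▸ Submodule.mem_top
        exact hxW e heG hev
      ext i' j'
      have h := congrFun (hx (Pi.single j' 1)) i'
      simpa [Matrix.mulVec_single, Matrix.one_apply, Pi.single_apply, eq_comm] using h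
  -- the character
  have hfin : Finite G := Subtype.finite
  let f : G → K := fun g => (key (g : GL (Fin 2) k) g.2).choose
  have hf : ∀ g : G, ((g : GL (Fin 2) k) : Matrix (Fin 2) (Fin 2) k).map φ *ᵥ v = f g • v :=
    fun g => (key (g : GL (Fin 2) k) g.2).choose_spec
  have hmul : ∀ g h : G, f (g * h) = f g * f h := by
    intro g h
    apply huniq
    rw [← hf (g * h)]
    have e1 : (((g * h : G) : GL (Fin 2) k) : Matrix (Fin 2) (Fin 2) k)
        = ((g : GL (Fin 2) k) : Matrix (Fin 2) (Fin 2) k) *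
          ((h : GL (Fin 2) k) : Matrix (Fin 2) (Fin 2) k) := by
      push_cast [Units.val_mul]
      rfl
    rw [e1, Matrix.map_mul, ← Matrix.mulVec_mulVec, hf h, Matrix.mulVec_smul, hf g,
      smul_smul, mul_comm (f h) (f g)]
  have hone : f 1 = 1 := by
    apply huniq
    rw [← hf 1]
    simp [Matrix.map_one φ (map_zero φ) (map_one φ), Matrix.one_mulVec]
  have hker : ∀ g : G, f g = 1 → g = 1 := by
    intro g hg1
    have h1 : ((g : GL (Fin 2) k) : Matrix (Fin 2) (Fin 2) k).map φ *ᵥ v = v := by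
      rw [hf g, hg1, one_smul]
    have h2 := hS (g : GL (Fin 2) k) g.2 h1
    exact Subtype.ext (by rw [h2]; rfl)
  have hfne : ∀ g : G, f g ≠ 0 := by
    intro g h0
    have h1 := hf g
    rw [h0, zero_smul] at h1
    exact hv0 (hcancel _ _ h1)
  let χ : G →* K := { toFun := f, map_one' := hone, map_mul' := hmul }
  have hinj : Function.Injective χ := by
    intro a b hab
    have h1 : f (a * b⁻¹) = 1 := by
      have h2 : f (a * b⁻¹) * f b = f b := by
        rw [← hmul, inv_mul_cancel_right]
        exact hab
      exact mul_right_cancel₀ (hfne b) (h2.trans (one_mul (f b)).symm)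
    have h3 := hker _ h1
    exact mul_inv_eq_one.1 h3
  refine ⟨isCyclic_of_subgroup_isDomain χ hinj, ?_⟩
  by_contra hodd
  have h2 : 2 ∣ Nat.card G := by
    rcases Nat.even_or_odd (Nat.card G) with h | h
    · exact h.two_dvd
    · exact absurd h hodd
  obtain ⟨g, hg⟩ := exists_prime_orderOf_dvd_card' 2 h2
  have hg2 : g * g = 1 := by
    have h := pow_orderOf_eq_one g
    rwa [hg, pow_two] at h
  have hsq : χ g * χ g = 1 := by rw [← χ.map_mul, hg2, χ.map_one]
  have hadd : χ g + 1 = 0 := by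
    have h3 : (χ g + 1) ^ 2 = 0 := by linear_combination hsq + (χ g + 1) * hK2
    exact pow_eq_zero_iff (by norm_num : (2:ℕ) ≠ 0) |>.1 h3
  have hχ1 : χ g = 1 := by linear_combination hadd - hK2
  have hg1 : g = 1 := hker g hχ1
  rw [hg1, orderOf_one] at hg
  exact absurd hg (by norm_num)
end

section
/- Let B be a commutative ring that is finite and free as a module over the 2-adic integers ℤ₂, let A ⊆ B be a ℤ₂-subalgebra, and let 𝔪 be a maximal ideal of A. Consider the space Λ of ℤ₂-module homomorphisms φ : B → F̄₂ (an algebraic closure of 𝔽₂) such that φ(𝔪^k · B) = 0 for some k ≥ 0, regarded as an F̄₂-vector space via the target. Then dim_{F̄₂} Λ = Σ_𝔞 dim_{𝔽₂}(B_𝔞 / 2B_𝔞), where the sum runs over the maximal ideals 𝔞 of B with 𝔞 ∩ A = 𝔪 and B_𝔞 denotes the localization of B at 𝔞. Equivalently, writing k_𝔞 = B/𝔞 for the (finite, characteristic 2) residue field at 𝔞, the summand equals [k_𝔞 : 𝔽₂] · dim_{k_𝔞}(B_𝔞/2B_𝔞). -/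
open scoped Classical
set_option maxHeartbeats 2000000

noncomputable section

/-- Lift an additive map killing an ideal through the ideal quotient. -/
def addQuotLift {R M : Type*} [CommRing R] [AddCommGroup M] (J : Ideal R)
    (f : R →+ M) (h : ∀ x ∈ J, f x = 0) : (R ⧸ J) →+ M where
  toFun x := Quotient.liftOn' x f fun a b hab => by
    have hab' : a - b ∈ J := (Submodule.quotientRel_def J).mp hab
    have h2 := h _ hab'
    rw [map_sub, sub_eq_zero] at h2; exact h2
  map_zero' := f.map_zero
  map_add' x y := Quotient.inductionOn₂' x y fun a b => f.map_add a b

@[simp] lemma addQuotLift_mk {R M : Type*} [CommRing R] [AddCommGroup M] (J : Ideal R)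
    (f : R →+ M) (h : ∀ x ∈ J, f x = 0) (a : R) :
    addQuotLift J f h (Ideal.Quotient.mk J a) = f a := rfl

section TwoTorsion

lemma card_pow_two (W : Type*) [AddCommGroup W] [Finite W] (h2 : ∀ x : W, 2 • x = 0) :
    Nat.card W = 2 ^ Nat.log 2 (Nat.card W) := by
  letI : Module (ZMod 2) W := AddCommGroup.zmodModule h2
  cases nonempty_fintype W
  have hc : Fintype.card W = Fintype.card (ZMod 2) ^ Module.finrank (ZMod 2) W :=
    Module.card_eq_pow_finrank
  rw [Nat.card_eq_fintype_card, hc, ZMod.card, Nat.log_pow one_lt_two]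

lemma finrank_addHom_eq (W : Type*) [AddCommGroup W] [Module (ZMod 2) W] [Finite W] :
    Module.finrank (AlgebraicClosure (ZMod 2)) (W →+ AlgebraicClosure (ZMod 2)) =
      Module.finrank (ZMod 2) W := by
  set k := AlgebraicClosure (ZMod 2)
  have hz : ∀ c : ZMod 2, c = 0 ∨ c = 1 := by decide
  -- additive maps are ZMod 2-linear
  let e : (W →+ k) ≃ₗ[k] (W →ₗ[ZMod 2] k) :=
    { toFun := fun φ =>
        { toFun := φ
          map_add' := φ.map_add
          map_smul' := by
            intro c x
            rcases hz c with rfl | rfl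
            · simp
            · simp }
      invFun := fun g => g.toAddMonoidHom
      map_add' := fun φ ψ => rfl
      map_smul' := fun c φ => rfl
      left_inv := fun φ => rfl
      right_inv := fun g => rfl }
  rw [e.finrank_eq]
  haveI : Module.Finite (ZMod 2) W := Module.Finite.of_finite (R := ZMod 2)
  let b := Module.finBasis (ZMod 2) W
  let e2 : (Fin (Module.finrank (ZMod 2) W) → k) ≃ₗ[k] (W →ₗ[ZMod 2] k) := b.constr k
  rw [← e2.finrank_eq, Module.finrank_fin_fun]

end TwoTorsion

lemma loc_card {B : Type} [CommRing B] (𝔞 : Ideal B) (h𝔞 : 𝔞.IsMaximal) (m : ℕ)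
    (b : B) (hb : b ∉ 𝔞) (hbm : ∀ x ∈ 𝔞 ^ m, b * x ∈ Ideal.span {(2:B)}) :
    haveI := h𝔞.isPrime
    Nat.card (Localization.AtPrime 𝔞 ⧸ Ideal.span {(2 : Localization.AtPrime 𝔞)}) =
      Nat.card (B ⧸ (Ideal.span {(2:B)} ⊔ 𝔞 ^ m)) := by
  haveI := h𝔞.isPrime
  set Q : Ideal B := Ideal.span {(2:B)} ⊔ 𝔞 ^ m with hQ
  set L := Localization.AtPrime 𝔞 with hL
  have hunit : ∀ s : 𝔞.primeCompl, IsUnit (Ideal.Quotient.mk Q (s:B)) := by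
    rintro ⟨s, hs⟩
    have hcop : IsCoprime (Ideal.span {s}) 𝔞 := by
      rw [Ideal.isCoprime_iff_sup_eq]
      by_contra hne
      have heq : 𝔞 = Ideal.span {s} ⊔ 𝔞 := h𝔞.eq_of_le hne le_sup_right
      exact hs (heq ▸ (le_sup_left (a := Ideal.span {s}) (b := 𝔞) (Ideal.mem_span_singleton_self s)) : s ∈ 𝔞)
    have hcop2 : IsCoprime (Ideal.span {s}) (𝔞 ^ m) := hcop.pow_right
    rw [Ideal.isCoprime_iff_sup_eq] at hcop2
    have h1 : (1:B) ∈ Ideal.span {s} ⊔ 𝔞 ^ m := hcop2 ▸ Submodule.mem_top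
    rcases Submodule.mem_sup.mp h1 with ⟨y, hy, z, hz, hyz⟩
    rcases Ideal.mem_span_singleton'.mp hy with ⟨c, rfl⟩
    refine IsUnit.of_mul_eq_one (Ideal.Quotient.mk Q c) ?_
    have hz' : (1:B) - c * s ∈ Q := by
      have : (1:B) - c * s = z := by linear_combination hyz.symm
      rw [this]; exact le_sup_right (α := Ideal B) hz
    have := (Ideal.Quotient.eq (I := Q)).mpr (by simpa using hz')
    simpa [mul_comm] using this.symm
  let ψ : L →+* B ⧸ Q := IsLocalization.lift (M := 𝔞.primeCompl) hunit
  have hψalg : ∀ x : B, ψ (algebraMap B L x) = Ideal.Quotient.mk Q x := fun x =>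
    IsLocalization.lift_eq hunit x
  have hsurj : Function.Surjective ψ := by
    intro t
    obtain ⟨x, rfl⟩ := Ideal.Quotient.mk_surjective t
    exact ⟨algebraMap B L x, hψalg x⟩
  have hker : RingHom.ker ψ = Ideal.map (algebraMap B L) Q := by
    apply le_antisymm
    · intro z hz
      obtain ⟨⟨x, s⟩, hxs⟩ := IsLocalization.surj (M := 𝔞.primeCompl) z
      have h0 : ψ (z * algebraMap B L (s:B)) = Ideal.Quotient.mk Q x := by
        rw [hxs, hψalg]
      rw [map_mul, RingHom.mem_ker.mp hz, zero_mul] at h0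
      have hxQ : x ∈ Q := Ideal.Quotient.eq_zero_iff_mem.mp h0.symm
      have hmem : z * algebraMap B L (s:B) ∈ Ideal.map (algebraMap B L) Q := by
        rw [hxs]; exact Ideal.mem_map_of_mem _ hxQ
      have hu : IsUnit (algebraMap B L (s:B)) := IsLocalization.map_units L s
      obtain ⟨u, hu⟩ := hu
      have : z = z * algebraMap B L (s:B) * ↑u⁻¹ := by
        rw [← hu, mul_assoc, Units.mul_inv, mul_one]
      rw [this]
      exact Ideal.mul_mem_right _ _ hmem
    · rw [Ideal.map_le_iff_le_comap]
      intro x hx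
      show ψ (algebraMap B L x) = 0
      rw [hψalg]
      exact Ideal.Quotient.eq_zero_iff_mem.mpr hx
  have hmap : Ideal.map (algebraMap B L) Q = Ideal.span {(2:L)} := by
    rw [hQ, Ideal.map_sup, Ideal.map_span, Set.image_singleton]
    have h2 : algebraMap B L (2:B) = (2:L) := map_ofNat _ 2
    rw [h2]
    have hle : Ideal.map (algebraMap B L) (𝔞 ^ m) ≤ Ideal.span {(2:L)} := by
      rw [Ideal.map_le_iff_le_comap]
      intro x hx
      obtain ⟨c, hc⟩ := Ideal.mem_span_singleton'.mp (hbm x hx)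
      obtain ⟨u, hu⟩ := IsLocalization.map_units L (⟨b, hb⟩ : 𝔞.primeCompl)
      show algebraMap B L x ∈ Ideal.span {(2:L)}
      refine Ideal.mem_span_singleton'.mpr ⟨↑u⁻¹ * algebraMap B L c, ?_⟩
      have : algebraMap B L (b * x) = algebraMap B L (c * 2) := by rw [hc]
      rw [map_mul, map_mul, h2] at this
      calc ↑u⁻¹ * algebraMap B L c * 2 = ↑u⁻¹ * (algebraMap B L c * 2) := by ring
      _ = ↑u⁻¹ * (algebraMap B L b * algebraMap B L x) := by rw [← this]
      _ = ↑u⁻¹ * (↑u * algebraMap B L x) := by rw [hu]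
      _ = algebraMap B L x := by rw [← mul_assoc, Units.inv_mul, one_mul]
    exact sup_eq_left.mpr hle
  have e : (L ⧸ RingHom.ker ψ) ≃+* B ⧸ Q := RingHom.quotientKerEquivOfSurjective hsurj
  rw [← hmap, ← hker]
  exact Nat.card_congr e.toEquiv

lemma finrank_addHom_card (W : Type*) [AddCommGroup W] [Finite W] (h2 : ∀ x : W, 2 • x = 0) :
    Module.finrank (AlgebraicClosure (ZMod 2)) (W →+ AlgebraicClosure (ZMod 2)) =
      Nat.log 2 (Nat.card W) := by
  letI : Module (ZMod 2) W := AddCommGroup.zmodModule h2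
  rw [finrank_addHom_eq]
  cases nonempty_fintype W
  have hc : Fintype.card W = Fintype.card (ZMod 2) ^ Module.finrank (ZMod 2) W :=
    Module.card_eq_pow_finrank
  rw [Nat.card_eq_fintype_card, hc, ZMod.card, Nat.log_pow one_lt_two]

lemma finite_quot_two (B : Type) [CommRing B] [Algebra ℤ_[2] B] [Module.Free ℤ_[2] B]
    [Module.Finite ℤ_[2] B] : Finite (B ⧸ Ideal.span {(2:B)}) := by
  classical
  set I2 : Ideal B := Ideal.span {(2:B)}
  let ι := Module.Free.ChooseBasisIndex ℤ_[2] B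
  let b : Module.Basis ι ℤ_[2] B := Module.Free.chooseBasis ℤ_[2] B
  refine Finite.of_surjective
    (fun ε : ι → ZMod 2 => Ideal.Quotient.mk I2 (∑ i, ((ε i).val : ℤ_[2]) • b i)) ?_
  intro t
  obtain ⟨x, rfl⟩ := Ideal.Quotient.mk_surjective t
  refine ⟨fun i => PadicInt.toZMod (b.repr x i), ?_⟩
  rw [Ideal.Quotient.eq]
  have hx : x = ∑ i, (b.repr x i) • b i := (b.sum_repr x).symm
  have hterm : ∀ i : ι,
      (((PadicInt.toZMod (b.repr x i)).val : ℤ_[2]) - b.repr x i) ∈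
        Ideal.span {(2 : ℤ_[2])} := by
    intro i
    have h0 : PadicInt.toZMod ((((PadicInt.toZMod (b.repr x i)).val : ℤ_[2])) - b.repr x i)
        = 0 := by
      rw [map_sub, map_natCast, ZMod.natCast_rightInverse _, sub_self]
    have hker : (((PadicInt.toZMod (b.repr x i)).val : ℤ_[2]) - b.repr x i) ∈
        RingHom.ker (PadicInt.toZMod (p := 2)) := h0
    rwa [PadicInt.ker_toZMod, PadicInt.maximalIdeal_eq_span_p] at hker
  have key : (∑ i, ((PadicInt.toZMod (b.repr x i)).val : ℤ_[2]) • b i) - x ∈ I2 := by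
    have hsplit : (∑ i, ((PadicInt.toZMod (b.repr x i)).val : ℤ_[2]) • b i) - x
        = ∑ i, (((PadicInt.toZMod (b.repr x i)).val : ℤ_[2]) - b.repr x i) • b i := by
      have h1 : ∑ i, (((PadicInt.toZMod (b.repr x i)).val : ℤ_[2]) - b.repr x i) • b i
          = (∑ i, ((PadicInt.toZMod (b.repr x i)).val : ℤ_[2]) • b i)
            - ∑ i, (b.repr x i) • b i := by
        rw [← Finset.sum_sub_distrib]
        exact Finset.sum_congr rfl fun i _ => sub_smul _ _ _
      rw [h1, b.sum_repr x]
    rw [hsplit]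
    refine Submodule.sum_mem _ fun i _ => ?_
    obtain ⟨c, hc⟩ := Ideal.mem_span_singleton'.mp (hterm i)
    rw [← hc, mul_comm, mul_smul]
    refine Ideal.mem_span_singleton'.mpr ⟨c • b i, ?_⟩
    rw [mul_comm, two_mul, two_smul]
  exact key

/-- Let `B` be a commutative ring, finite and free over `ℤ₂`, `A ⊆ B` a `ℤ₂`-subalgebra and
`𝔪` a maximal ideal of `A`.  The space `Λ` of `ℤ₂`-module maps `φ : B → F̄₂` (equivalently,
additive maps, since any such map kills `2B`) killed by some power of `𝔪` has `F̄₂`-dimension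
`Σ_𝔞 dim_{𝔽₂} (B_𝔞 / 2 B_𝔞) = Σ_𝔞 [k_𝔞 : 𝔽₂]·dim_{k_𝔞}(B_𝔞/2B_𝔞)`, the sum being over the
maximal ideals `𝔞` of `B` lying over `𝔪`.  (Here `dim_{𝔽₂}` of a finite `𝔽₂`-vector space is
written as `Nat.log 2` of its cardinality.) -/
theorem dim_of_hecke_eigenspace
    (B : Type) [CommRing B] [Algebra ℤ_[2] B] [Module.Free ℤ_[2] B] [Module.Finite ℤ_[2] B]
    (A : Subalgebra ℤ_[2] B) (𝔪 : Ideal A) (h𝔪 : 𝔪.IsMaximal)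
    (Λ : Submodule (AlgebraicClosure (ZMod 2)) (B →+ AlgebraicClosure (ZMod 2)))
    (hΛ : ∀ φ : B →+ AlgebraicClosure (ZMod 2),
      φ ∈ Λ ↔ ∃ K : ℕ, ∀ a ∈ 𝔪 ^ K, ∀ b : B, φ ((a : B) * b) = 0) :
    Module.finrank (AlgebraicClosure (ZMod 2)) Λ =
      ∑ᶠ 𝔞 : {𝔞 : Ideal B // 𝔞.IsMaximal ∧ 𝔞.comap (algebraMap A B) = 𝔪},
        haveI : 𝔞.1.IsPrime := 𝔞.2.1.isPrime
        Nat.log 2 (Nat.card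
          (Localization.AtPrime 𝔞.1 ⧸
            (Ideal.span {(2 : Localization.AtPrime 𝔞.1)}))) := by
  classical
  set 𝕜 := AlgebraicClosure (ZMod 2) with h𝕜
  set I2 : Ideal B := Ideal.span {(2:B)} with hI2
  set π := Ideal.Quotient.mk I2 with hπ
  have surjπ : Function.Surjective π := Ideal.Quotient.mk_surjective
  haveI hfinR' : Finite (B ⧸ I2) := finite_quot_two B
  haveI : Finite (Ideal (B ⧸ I2)) :=
    Finite.of_injective (fun I : Ideal (B ⧸ I2) => (I : Set (B ⧸ I2)))
      fun _ _ h => SetLike.coe_injective h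
  set 𝔭 : Ideal B := Ideal.map (algebraMap A B) 𝔪 with h𝔭
  set P : Ideal (B ⧸ I2) := Ideal.map π 𝔭 with hP
  -- integrality instances
  haveI hintB : Algebra.IsIntegral ℤ_[2] B := Algebra.IsIntegral.of_finite _ _
  haveI hintAB : Algebra.IsIntegral A B :=
    ⟨fun x => IsIntegral.tower_top (Algebra.IsIntegral.isIntegral (R := ℤ_[2]) x)⟩
  haveI hintA : Algebra.IsIntegral ℤ_[2] A :=
    ⟨fun a => IsIntegral.tower_bot (A := A) (Subtype.val_injective)
      (Algebra.IsIntegral.isIntegral (R := ℤ_[2]) (algebraMap A B a))⟩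
  -- 2 ∈ 𝔪
  have h2𝔪 : (2 : A) ∈ 𝔪 := by
    haveI := h𝔪
    have hcm : (Ideal.comap (algebraMap ℤ_[2] A) 𝔪).IsMaximal :=
      Ideal.isMaximal_comap_of_isIntegral_of_isMaximal 𝔪
    have heq := IsLocalRing.eq_maximalIdeal hcm
    have h2 : (2:ℤ_[2]) ∈ Ideal.comap (algebraMap ℤ_[2] A) 𝔪 := by
      rw [heq, PadicInt.maximalIdeal_eq_span_p]
      exact Ideal.mem_span_singleton_self _
    have h3 := Ideal.mem_comap.mp h2
    rwa [map_ofNat] at h3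
  -- stabilization exponents and Nakayama data, packaged into the choice of m
  obtain ⟨m, hm1, hJstab, hnak⟩ :
      ∃ m : ℕ, 1 ≤ m ∧ (∀ K, m ≤ K → I2 ⊔ 𝔭 ^ K = I2 ⊔ 𝔭 ^ m) ∧
        (∀ 𝔮 : Ideal (B ⧸ I2), 𝔮.IsMaximal →
          ∃ r : B ⧸ I2, r ∉ 𝔮 ∧ ∀ y ∈ 𝔮 ^ m, r * y = 0) := by
    have hstab : ∀ I : Ideal (B ⧸ I2), ∃ n, ∀ K, n ≤ K → I ^ K = I ^ n := by
      intro I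
      obtain ⟨n, hn⟩ := IsArtinian.monotone_stabilizes (R := B ⧸ I2) (M := B ⧸ I2)
        ⟨fun K => OrderDual.toDual (I ^ K), fun K L hKL => Ideal.pow_le_pow_right hKL⟩
      exact ⟨n, fun K hK => congrArg OrderDual.ofDual (hn K hK).symm⟩
    let MaxI := {𝔮 : Ideal (B ⧸ I2) // 𝔮.IsMaximal}
    haveI : Finite MaxI := Subtype.finite
    haveI := Fintype.ofFinite MaxI
    choose g hgspec using fun 𝔮 : MaxI => hstab 𝔮.1
    obtain ⟨nP, hnP⟩ := hstab P
    set m := 1 + nP + Finset.univ.sup g with hm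
    refine ⟨m, by omega, ?_, ?_⟩
    · intro K hK
      have hPK : P ^ K = P ^ m := by
        rw [hnP K (by omega), hnP m (by omega)]
      have hcm : ∀ (n : ℕ), Ideal.comap π (P ^ n) = I2 ⊔ 𝔭 ^ n := by
        intro n
        rw [hP, ← Ideal.map_pow, Ideal.comap_map_of_surjective π surjπ,
          ← RingHom.ker_eq_comap_bot, Ideal.mk_ker, sup_comm]
      rw [← hcm K, ← hcm m, hPK]
    · intro 𝔮 h𝔮
      have hg𝔮 : g ⟨𝔮, h𝔮⟩ ≤ m := by
        have := Finset.le_sup (f := g) (Finset.mem_univ ⟨𝔮, h𝔮⟩); omega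
      have hstab𝔮 : 𝔮 ^ m = 𝔮 ^ (m + 1) := by
        rw [hgspec ⟨𝔮, h𝔮⟩ m hg𝔮, hgspec ⟨𝔮, h𝔮⟩ (m+1) (by omega)]
      have hfg : (𝔮 ^ m).FG := IsNoetherian.noetherian _
      have hle : 𝔮 ^ m ≤ 𝔮 • 𝔮 ^ m := by
        rw [Ideal.smul_eq_mul, ← pow_succ']
        exact le_of_eq hstab𝔮
      obtain ⟨r, hr1, hr2⟩ :=
        Submodule.exists_sub_one_mem_and_smul_eq_zero_of_fg_of_le_smul 𝔮 (𝔮 ^ m) hfg hle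
      refine ⟨r, ?_, fun y hy => by
        have := hr2 y hy; rwa [smul_eq_mul] at this⟩
      intro hr𝔮
      have h1 : (1 : B ⧸ I2) ∈ 𝔮 := by
        have := 𝔮.sub_mem hr𝔮 hr1
        simpa using this
      exact h𝔮.ne_top ((Ideal.eq_top_iff_one 𝔮).mpr h1)
  set J : Ideal B := I2 ⊔ 𝔭 ^ m with hJ
  -- characterization of Λ
  have char2 : ∀ z : 𝕜, z + z = 0 := by
    intro z
    have : ((2:ℕ) : 𝕜) = 0 := by
      exact_mod_cast CharP.cast_eq_zero 𝕜 2
    calc z + z = ((2:ℕ) : 𝕜) * z := by push_cast; ring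
    _ = 0 := by rw [this, zero_mul]
  have hΛJ : ∀ φ : B →+ 𝕜, (φ ∈ Λ ↔ ∀ x ∈ J, φ x = 0) := by
    intro φ
    constructor
    · intro hφ x hx
      obtain ⟨K, hK⟩ := (hΛ φ).mp hφ
      have hkill : ∀ y ∈ Ideal.map (algebraMap A B) (𝔪 ^ K), ∀ c : B, φ (y * c) = 0 := by
        intro y hy
        have hy' : y ∈ Ideal.span ((algebraMap A B) '' ((𝔪 ^ K : Ideal A) : Set A)) := hy
        refine Submodule.span_induction ?_ ?_ ?_ ?_ hy'
        · rintro z ⟨a, ha, rfl⟩ c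
          exact hK a ha c
        · intro c; rw [zero_mul, map_zero]
        · intro z w hz hw hzc hwc c
          rw [add_mul, map_add, hzc c, hwc c, add_zero]
        · intro b z hz hzc c
          rw [smul_eq_mul, show (b*z)*c = z*(b*c) by ring]
          exact hzc _
      have hstab := hJstab (max K m) (le_max_right _ _)
      rw [← hstab] at hx
      obtain ⟨y, hy, z, hz, rfl⟩ := Submodule.mem_sup.mp hx
      have hzmem : z ∈ Ideal.map (algebraMap A B) (𝔪 ^ K) := by
        rw [Ideal.map_pow]
        exact Ideal.pow_le_pow_right (le_max_left _ _) hz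
      obtain ⟨c, hc⟩ := Ideal.mem_span_singleton'.mp hy
      have hφy : φ y = 0 := by
        rw [← hc, show c * 2 = c + c by ring, map_add]
        exact char2 _
      have hφz : φ z = 0 := by
        have := hkill z hzmem 1
        rwa [mul_one] at this
      rw [map_add, hφy, hφz, add_zero]
    · intro h
      refine (hΛ φ).mpr ⟨m, fun a ha c => ?_⟩
      refine h _ (le_sup_right (a := I2) ?_)
      have hmem : (a : B) ∈ 𝔭 ^ m := by
        rw [h𝔭, ← Ideal.map_pow]
        exact Ideal.mem_map_of_mem _ ha
      exact Ideal.mul_mem_right _ _ hmem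
  -- Λ has the dimension of the dual of B ⧸ J
  have hdim : Module.finrank 𝕜 Λ = Module.finrank 𝕜 ((B ⧸ J) →+ 𝕜) := by
    let Φ : ((B ⧸ J) →+ 𝕜) →ₗ[𝕜] (B →+ 𝕜) :=
      { toFun := fun g => g.comp (Ideal.Quotient.mk J).toAddMonoidHom
        map_add' := fun g h => rfl
        map_smul' := fun c g => rfl }
    have hinj : Function.Injective Φ := by
      intro g g' h
      ext t
      obtain ⟨x, rfl⟩ := Ideal.Quotient.mk_surjective t
      exact DFunLike.congr_fun h x
    have hrange : LinearMap.range Φ = Λ := by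
      ext φ
      constructor
      · rintro ⟨g, rfl⟩
        refine (hΛJ _).mpr fun x hx => ?_
        show g (Ideal.Quotient.mk J x) = 0
        rw [Ideal.Quotient.eq_zero_iff_mem.mpr hx, map_zero]
      · intro hφ
        exact ⟨addQuotLift J φ ((hΛJ φ).mp hφ), AddMonoidHom.ext fun x => rfl⟩
    rw [← hrange]
    exact (LinearEquiv.ofInjective Φ hinj).finrank_eq.symm
  -- finiteness and 2-torsion of quotients
  have hfinJ : ∀ (J' : Ideal B), I2 ≤ J' → Finite (B ⧸ J') := by
    intro J' hle
    refine Finite.of_surjective (Ideal.Quotient.factor hle) ?_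
    intro t
    obtain ⟨x, rfl⟩ := Ideal.Quotient.mk_surjective t
    exact ⟨π x, Ideal.Quotient.factor_mk hle x⟩
  have htor : ∀ (J' : Ideal B), I2 ≤ J' → ∀ x : B ⧸ J', 2 • x = 0 := by
    intro J' hle x
    obtain ⟨b, rfl⟩ := Ideal.Quotient.mk_surjective x
    have h2b : b + b ∈ J' := by
      refine hle (Ideal.mem_span_singleton'.mpr ⟨b, by ring⟩)
    rw [two_nsmul, ← map_add]
    exact Ideal.Quotient.eq_zero_iff_mem.mpr h2b
  -- the indexing type of maximal ideals over 𝔪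
  have h2𝔞 : ∀ s : {𝔞 : Ideal B // 𝔞.IsMaximal ∧ 𝔞.comap (algebraMap A B) = 𝔪}, I2 ≤ s.1 := by
    intro s
    rw [hI2, Ideal.span_le, Set.singleton_subset_iff]
    have h2c : (2:A) ∈ Ideal.comap (algebraMap A B) s.1 := s.2.2.symm ▸ h2𝔪
    have h2' := Ideal.mem_comap.mp h2c
    rwa [map_ofNat] at h2'
  haveI hfinsig : Finite {𝔞 : Ideal B // 𝔞.IsMaximal ∧ 𝔞.comap (algebraMap A B) = 𝔪} := by
    refine Finite.of_injective
      (fun s : {𝔞 : Ideal B // 𝔞.IsMaximal ∧ 𝔞.comap (algebraMap A B) = 𝔪} =>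
        Ideal.map π s.1) ?_
    intro s t h
    apply Subtype.ext
    have hs := Ideal.comap_map_of_surjective π surjπ s.1
    have ht := Ideal.comap_map_of_surjective π surjπ t.1
    rw [← RingHom.ker_eq_comap_bot, Ideal.mk_ker] at hs ht
    calc s.1 = s.1 ⊔ I2 := (sup_eq_left.mpr (h2𝔞 s)).symm
    _ = Ideal.comap π (Ideal.map π s.1) := hs.symm
    _ = Ideal.comap π (Ideal.map π t.1) := by
          rw [show Ideal.map π s.1 = Ideal.map π t.1 from h]
    _ = t.1 ⊔ I2 := ht
    _ = t.1 := sup_eq_left.mpr (h2𝔞 t)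
  have hmapI2 : Ideal.map π I2 = ⊥ := by
    show Ideal.map π (Ideal.span {(2:B)}) = ⊥
    rw [Ideal.map_span, Set.image_singleton]
    have : π (2:B) = 0 := Ideal.Quotient.eq_zero_iff_mem.mpr (Ideal.mem_span_singleton_self _)
    rw [this, Ideal.span_singleton_eq_bot.mpr rfl]
  have hnakB : ∀ s : {𝔞 : Ideal B // 𝔞.IsMaximal ∧ 𝔞.comap (algebraMap A B) = 𝔪}, ∃ b : B, b ∉ s.1 ∧ ∀ x ∈ s.1 ^ m, b * x ∈ I2 := by
    intro s
    have hmax' : (Ideal.map π s.1).IsMaximal := by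
      rcases Ideal.map_eq_top_or_isMaximal_of_surjective π surjπ s.2.1 with htop | hmax
      · exfalso
        have hcm := Ideal.comap_map_of_surjective π surjπ s.1
        rw [htop, Ideal.comap_top, ← RingHom.ker_eq_comap_bot, Ideal.mk_ker,
          sup_eq_left.mpr (h2𝔞 s)] at hcm
        exact s.2.1.ne_top hcm.symm
      · exact hmax
    obtain ⟨r, hr1, hr2⟩ := hnak _ hmax'
    obtain ⟨b, rfl⟩ := surjπ r
    refine ⟨b, fun hb => hr1 (Ideal.mem_map_of_mem π hb), fun x hx => ?_⟩
    have hπx : π x ∈ (Ideal.map π s.1) ^ m := by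
      rw [← Ideal.map_pow]
      exact Ideal.mem_map_of_mem π hx
    have hz := hr2 _ hπx
    rw [← map_mul] at hz
    exact (Ideal.Quotient.eq_zero_iff_mem).mp hz
  set f : {𝔞 : Ideal B // 𝔞.IsMaximal ∧ 𝔞.comap (algebraMap A B) = 𝔪} → Ideal B := fun s => I2 ⊔ s.1 ^ m with hff
  have hJf : ∀ s : {𝔞 : Ideal B // 𝔞.IsMaximal ∧ 𝔞.comap (algebraMap A B) = 𝔪}, J ≤ f s := by
    intro s
    rw [hJ]
    simp only [hff]
    exact sup_le_sup_left
      (Ideal.pow_right_mono (Ideal.map_le_iff_le_comap.mpr (le_of_eq s.2.2.symm)) m) _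
  have hcop : Pairwise (Function.onFun IsCoprime f) := by
    intro s t hst
    rw [Function.onFun, Ideal.isCoprime_iff_sup_eq]
    have hne : s.1 ≠ t.1 := fun h => hst (Subtype.ext h)
    have h1 : s.1 ⊔ t.1 = ⊤ := Ideal.IsMaximal.coprime_of_ne s.2.1 t.2.1 hne
    have h2 : IsCoprime s.1 t.1 := Ideal.isCoprime_iff_sup_eq.mpr h1
    have h3 : IsCoprime (s.1 ^ m) (t.1 ^ m) := h2.pow
    rw [Ideal.isCoprime_iff_sup_eq] at h3
    rw [eq_top_iff, ← h3]
    simp only [hff]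
    exact sup_le_sup le_sup_right le_sup_right
  have hinf : (⨅ s : {𝔞 : Ideal B // 𝔞.IsMaximal ∧ 𝔞.comap (algebraMap A B) = 𝔪}, f s) = J := by
    refine le_antisymm ?_ (le_iInf hJf)
    intro x hx
    have hyP : π x ∈ P ^ m := by
      set D := Submodule.colon (P ^ m) (Ideal.span {π x}) with hD
      have hPmD : P ^ m ≤ D := by
        intro p hp
        rw [hD, Submodule.mem_colon]
        intro z hz
        obtain ⟨c, rfl⟩ := Ideal.mem_span_singleton'.mp hz
        rw [smul_eq_mul]
        exact Ideal.mul_mem_right _ _ hp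
      have hDtop : D = ⊤ := by
        by_contra hne
        obtain ⟨𝔟', h𝔟'max, hD𝔟⟩ := Ideal.exists_le_maximal D hne
        haveI := h𝔟'max
        haveI h𝔟max : (Ideal.comap π 𝔟').IsMaximal :=
          Ideal.comap_isMaximal_of_surjective π surjπ
        by_cases hc : (Ideal.comap π 𝔟').comap (algebraMap A B) = 𝔪
        · obtain ⟨r, hr1, hr2⟩ := hnak 𝔟' h𝔟'max
          have hxfs : x ∈ f (⟨Ideal.comap π 𝔟', h𝔟max, hc⟩ : {𝔞 : Ideal B // 𝔞.IsMaximal ∧ 𝔞.comap (algebraMap A B) = 𝔪}) :=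
            (Submodule.mem_iInf _).mp hx _
          have hπx : π x ∈ 𝔟' ^ m := by
            have hmem : π x ∈ Ideal.map π (f ⟨Ideal.comap π 𝔟', h𝔟max, hc⟩) :=
              Ideal.mem_map_of_mem π hxfs
            simp only [hff] at hmem
            rw [Ideal.map_sup, Ideal.map_pow, Ideal.map_comap_of_surjective π surjπ,
              hmapI2, bot_sup_eq] at hmem
            exact hmem
          have hrD : r ∈ D := by
            rw [hD, Submodule.mem_colon]
            intro z hz
            obtain ⟨c, rfl⟩ := Ideal.mem_span_singleton'.mp hz
            rw [smul_eq_mul, show r * (c * π x) = c * (r * π x) by ring,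
              hr2 _ hπx, mul_zero]
            exact Submodule.zero_mem _
          exact hr1 (hD𝔟 hrD)
        · haveI hAm : (Ideal.comap (algebraMap A B) (Ideal.comap π 𝔟')).IsMaximal :=
            Ideal.isMaximal_comap_of_isIntegral_of_isMaximal _
          have hnle : ¬ 𝔪 ≤ Ideal.comap (algebraMap A B) (Ideal.comap π 𝔟') := by
            intro hle'
            exact hc (h𝔪.eq_of_le hAm.ne_top hle').symm
          obtain ⟨a, ha𝔪, hna⟩ := SetLike.not_le_iff_exists.mp hnle
          have hPle : P ≤ 𝔟' := by
            have hPm : P ^ m ≤ 𝔟' := le_trans hPmD hD𝔟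
            exact (Ideal.IsPrime.pow_le_iff (Nat.one_le_iff_ne_zero.mp hm1)).mp hPm
          have hmem : π (algebraMap A B a) ∈ P :=
            Ideal.mem_map_of_mem π (Ideal.mem_map_of_mem _ ha𝔪)
          exact hna (Ideal.mem_comap.mpr (Ideal.mem_comap.mpr (hPle hmem)))
      have h1D : (1 : B ⧸ I2) ∈ D := hDtop ▸ Submodule.mem_top
      have hfin := Submodule.mem_colon.mp h1D (π x) (Ideal.mem_span_singleton_self _)
      rwa [one_smul] at hfin
    have hcm : Ideal.comap π (P ^ m) = J := by
      rw [hP, ← Ideal.map_pow, Ideal.comap_map_of_surjective π surjπ,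
        ← RingHom.ker_eq_comap_bot, Ideal.mk_ker, sup_comm, hJ]
    exact hcm ▸ Ideal.mem_comap.mpr hyP
  haveI := Fintype.ofFinite {𝔞 : Ideal B // 𝔞.IsMaximal ∧ 𝔞.comap (algebraMap A B) = 𝔪}
  have e3 := Ideal.quotientInfRingEquivPiQuotient f hcop
  have hcardJ : Nat.card (B ⧸ J) = ∏ s : {𝔞 : Ideal B // 𝔞.IsMaximal ∧ 𝔞.comap (algebraMap A B) = 𝔪}, Nat.card (B ⧸ f s) := by
    have hcc := Nat.card_congr e3.toEquiv
    rw [hinf] at hcc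
    rw [hcc, Nat.card_pi]
  have hloc : ∀ s : {𝔞 : Ideal B // 𝔞.IsMaximal ∧ 𝔞.comap (algebraMap A B) = 𝔪}, Nat.card (B ⧸ f s) =
      haveI : s.1.IsPrime := s.2.1.isPrime
      Nat.card (Localization.AtPrime s.1 ⧸
        Ideal.span {(2 : Localization.AtPrime s.1)}) := by
    intro s
    haveI : s.1.IsPrime := s.2.1.isPrime
    obtain ⟨b, hb, hbm⟩ := hnakB s
    have hl := (loc_card s.1 s.2.1 m b hb (fun x hx => hbm x hx)).symm
    simpa only [hff] using hl
  have hIf : ∀ s : {𝔞 : Ideal B // 𝔞.IsMaximal ∧ 𝔞.comap (algebraMap A B) = 𝔪}, I2 ≤ f s := fun s => by simp only [hff]; exact le_sup_left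
  have hpow : ∀ s : {𝔞 : Ideal B // 𝔞.IsMaximal ∧ 𝔞.comap (algebraMap A B) = 𝔪}, Nat.card (B ⧸ f s) = 2 ^ Nat.log 2 (Nat.card (B ⧸ f s)) := by
    intro s
    haveI : Finite (B ⧸ f s) := hfinJ (f s) (hIf s)
    exact card_pow_two _ (htor (f s) (hIf s))
  haveI : Finite (B ⧸ J) := hfinJ J le_sup_left
  rw [hdim, finrank_addHom_card _ (htor J le_sup_left), hcardJ]
  have hprod : ∏ s : {𝔞 : Ideal B // 𝔞.IsMaximal ∧ 𝔞.comap (algebraMap A B) = 𝔪}, Nat.card (B ⧸ f s)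
      = 2 ^ ∑ s : {𝔞 : Ideal B // 𝔞.IsMaximal ∧ 𝔞.comap (algebraMap A B) = 𝔪}, Nat.log 2 (Nat.card (B ⧸ f s)) := by
    rw [← Finset.prod_pow_eq_pow_sum]
    exact Finset.prod_congr rfl fun s _ => hpow s
  rw [hprod, Nat.log_pow one_lt_two, finsum_eq_sum_of_fintype]
  exact Finset.sum_congr rfl fun s _ => by rw [hloc s]
end
end

section
/- Let (R, 𝔪) be a commutative local ring, let M be a free R-module of rank 2, and let T : M → M be an R-linear endomorphism such that (T − id)² = 0 and such that the induced endomorphism of M/𝔪M is not the identity. Then there exists an R-basis (e₁, e₂) of M with T(e₁) = e₁ and T(e₂) = e₁ + e₂; that is, in this basis T has matrix [[1, 1], [0, 1]]. -/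
private lemma mem_smul_top_iff_repr {R M : Type} [CommRing R] [AddCommGroup M] [Module R M]
    {ι : Type} (b : Module.Basis ι R M) (I : Ideal R) (x : M) :
    x ∈ I • (⊤ : Submodule R M) ↔ ∀ i, b.repr x i ∈ I := by
  rw [← b.span_eq, Submodule.mem_ideal_smul_span_iff_exists_sum]
  constructor
  · rintro ⟨a, ha, rfl⟩ i
    rw [← Finsupp.linearCombination_apply, b.repr_linearCombination]
    exact ha i
  · intro h
    exact ⟨b.repr x, h, by
      rw [← Finsupp.linearCombination_apply, b.linearCombination_repr]⟩

/-- If `M` is a free module of rank 2 over a local ring `(R, 𝔪)` and `T : M → M` satisfies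
`(T − id)² = 0` while the induced endomorphism of `M/𝔪M` is not the identity, then there is
a basis `(e₁, e₂)` of `M` in which `T` has matrix `[[1,1],[0,1]]`. -/
theorem unipotent_matrix_form_over_local_ring
    (R : Type) [CommRing R] [IsLocalRing R]
    (M : Type) [AddCommGroup M] [Module R M]
    (b₀ : Module.Basis (Fin 2) R M)
    (T : M →ₗ[R] M)
    (hT : (T - LinearMap.id) ∘ₗ (T - LinearMap.id) = 0)
    (hred : ∃ m : M, T m - m ∉ (IsLocalRing.maximalIdeal R) • (⊤ : Submodule R M)) :
    ∃ b : Module.Basis (Fin 2) R M, T (b 0) = b 0 ∧ T (b 1) = b 0 + b 1 := by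
  obtain ⟨m, hm⟩ := hred
  set I := IsLocalRing.maximalIdeal R with hI
  set N : M →ₗ[R] M := T - LinearMap.id with hNdef
  have hN2 : ∀ x : M, N (N x) = 0 := by
    intro x
    have := LinearMap.ext_iff.mp hT x
    simpa [N] using this
  have hNm : N m = T m - m := by simp [N]
  have hmN : N m ∉ I • (⊤ : Submodule R M) := hNm ▸ hm
  set x0 := b₀.repr m 0 with hx0
  set x1 := b₀.repr m 1 with hx1
  set y0 := b₀.repr (N m) 0 with hy0
  set y1 := b₀.repr (N m) 1 with hy1
  -- N maps I • ⊤ into I • ⊤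
  have hNsmul : ∀ z : M, z ∈ I • (⊤ : Submodule R M) → N z ∈ I • (⊤ : Submodule R M) := by
    intro z hz
    have : N z ∈ Submodule.map N (I • (⊤ : Submodule R M)) := Submodule.mem_map_of_mem hz
    rw [Submodule.map_smul''] at this
    exact smul_mono_right I (le_top : Submodule.map N ⊤ ≤ ⊤) this
  -- the determinant of (N m, m) in the basis b₀
  have hdet : b₀.det ![N m, m] = y0 * x1 - x0 * y1 := by
    rw [Module.Basis.det_apply, Matrix.det_fin_two]
    simp [Module.Basis.toMatrix_apply, hx0, hx1, hy0, hy1, mul_comm]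
  have key : IsUnit (b₀.det ![N m, m]) := by
    by_contra hdu
    have hdI : y0 * x1 - x0 * y1 ∈ I := by
      rw [← hdet]
      exact IsLocalRing.mem_maximalIdeal _ |>.mpr hdu
    -- some coordinate of N m is a unit
    have : ¬ (∀ i, b₀.repr (N m) i ∈ I) := fun h =>
      hmN ((mem_smul_top_iff_repr b₀ I (N m)).mpr h)
    push_neg at this
    obtain ⟨i, hi⟩ := this
    have hiu : IsUnit (b₀.repr (N m) i) := by
      by_contra h
      exact hi (IsLocalRing.mem_maximalIdeal _ |>.mpr h)
    obtain ⟨u, hu⟩ := hiu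
    fin_cases i
    · -- y0 is a unit
      have hu' : (u : R) = y0 := hu
      set c : R := x0 * (↑u⁻¹ : R) with hc
      have hm' : m - c • N m ∈ I • (⊤ : Submodule R M) := by
        rw [mem_smul_top_iff_repr b₀ I]
        intro j
        fin_cases j <;> simp only [Fin.zero_eta, Fin.mk_one]
        · have : b₀.repr (m - c • N m) 0 = x0 - c * y0 := by
            simp [hx0, hy0, sub_smul, mul_comm]
          rw [this, hc, ← hu', mul_assoc, Units.inv_mul, mul_one, sub_self]
          exact I.zero_mem
        · have h1 : b₀.repr (m - c • N m) 1 = x1 - c * y1 := by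
            simp [hx1, hy1, sub_smul, mul_comm]
          have h2 : x1 - c * y1 = (↑u⁻¹ : R) * (y0 * x1 - x0 * y1) := by
            rw [← hu', hc]
            linear_combination (-x1) * u.inv_mul
          rw [h1, h2]
          exact I.mul_mem_left _ hdI
      have := hNsmul _ hm'
      have hNm' : N (m - c • N m) = N m := by
        rw [map_sub, map_smul, hN2, smul_zero, sub_zero]
      rw [hNm'] at this
      exact hmN this
    · -- y1 is a unit
      have hu' : (u : R) = y1 := hu
      set c : R := x1 * (↑u⁻¹ : R) with hc
      have hm' : m - c • N m ∈ I • (⊤ : Submodule R M) := by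
        rw [mem_smul_top_iff_repr b₀ I]
        intro j
        fin_cases j <;> simp only [Fin.zero_eta, Fin.mk_one]
        · have h1 : b₀.repr (m - c • N m) 0 = x0 - c * y0 := by
            simp [hx0, hy0, sub_smul, mul_comm]
          have h2 : x0 - c * y0 = -((↑u⁻¹ : R) * (y0 * x1 - x0 * y1)) := by
            rw [← hu', hc]
            linear_combination (-x0) * u.inv_mul
          rw [h1, h2]
          exact I.neg_mem (I.mul_mem_left _ hdI)
        · have : b₀.repr (m - c • N m) 1 = x1 - c * y1 := by
            simp [hx1, hy1, sub_smul, mul_comm]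
          rw [this, hc, ← hu', mul_assoc, Units.inv_mul, mul_one, sub_self]
          exact I.zero_mem
      have := hNsmul _ hm'
      have hNm' : N (m - c • N m) = N m := by
        rw [map_sub, map_smul, hN2, smul_zero, sub_zero]
      rw [hNm'] at this
      exact hmN this
  obtain ⟨hli, hspan⟩ := (Module.Basis.is_basis_iff_det b₀).mpr key
  refine ⟨Module.Basis.mk hli hspan.ge, ?_, ?_⟩
  · have h0 : (Module.Basis.mk hli hspan.ge) 0 = N m := by simp [Module.Basis.mk_apply]
    rw [h0]
    have h := hN2 m
    rw [hNdef] at h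
    simp only [LinearMap.sub_apply, LinearMap.id_apply] at h
    rw [sub_eq_zero] at h
    exact h
  · have h0 : (Module.Basis.mk hli hspan.ge) 0 = N m := by simp [Module.Basis.mk_apply]
    have h1 : (Module.Basis.mk hli hspan.ge) 1 = m := by simp [Module.Basis.mk_apply]
    rw [h0, h1, hNm]
    abel
end
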